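/- Let ρ_1,…,ρ_n be density matrices on ℂ^D such that for all i ≠ j, the column space of ρ_i is not contained in the column space of ρ_j. Then the n-fold tensor powers ρ_1^{⊗n},…,ρ_n^{⊗n} are unambiguously distinguishable. -/

import Mathlib

open Matrix Kronecker
open scoped ComplexOrder

noncomputable section

/-- A quantum operation on ℂ^d given by a finite family of Kraus operators
satisfying the completeness condition. -/
structure QuantumOp (d : ℕ) where
  m : ℕ
  K : Fin m → Matrix (Fin d) (Fin d) ℂ
  complete : ∑ k, (K k)ᴴ * K k = 1

/-- The support of a quantum operation: the span of its Kraus operators. -/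
def QuantumOp.supp {d : ℕ} (E : QuantumOp d) : Submodule ℂ (Matrix (Fin d) (Fin d) ℂ) :=
  Submodule.span ℂ (Set.range E.K)

/-- The output state (E ⊗ I)(|ψ⟩⟨ψ|) = Σ_k (E^k ⊗ I)|ψ⟩⟨ψ|(E^k ⊗ I)†. -/
def QuantumOp.output {d : ℕ} (E : QuantumOp d) (da : ℕ) (ψ : Fin d × Fin da → ℂ) :
    Matrix (Fin d × Fin da) (Fin d × Fin da) ℂ :=
  ∑ k, (E.K k ⊗ₖ (1 : Matrix (Fin da) (Fin da) ℂ)) * vecMulVec ψ (star ψ) *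
    (E.K k ⊗ₖ (1 : Matrix (Fin da) (Fin da) ℂ))ᴴ

/-- States σ_1, …, σ_n are unambiguously distinguishable if there is a POVM
{Π_0, Π_1, …, Π_n} with tr(Π_i σ_j) = 0 for i ≠ j and tr(Π_i σ_i) > 0. -/
def UnambiguouslyDistinguishable {μ : Type*} [Fintype μ] [DecidableEq μ] {n : ℕ}
    (σ : Fin n → Matrix μ μ ℂ) : Prop :=
  ∃ P0 : Matrix μ μ ℂ, ∃ P : Fin n → Matrix μ μ ℂ,
    P0.PosSemidef ∧ (∀ i, (P i).PosSemidef) ∧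
    (P0 + ∑ i, P i = 1) ∧
    (∀ i j, i ≠ j → (P i * σ j).trace = 0) ∧
    (∀ i, 0 < (P i * σ i).trace)

/-- The N-fold tensor (Kronecker) power of a matrix on ℂ^D, as a matrix on (ℂ^D)^{⊗N}. -/
def tensorPow {D : ℕ} (ρ : Matrix (Fin D) (Fin D) ℂ) (N : ℕ) :
    Matrix (Fin N → Fin D) (Fin N → Fin D) ℂ :=
  fun a b => ∏ t, ρ (a t) (b t)

namespace UnambigAux

variable {D n : ℕ}

/-- Entrywise tensor of a family of matrices. -/
def tens (f : Fin n → Matrix (Fin D) (Fin D) ℂ) : Matrix (Fin n → Fin D) (Fin n → Fin D) ℂ :=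
  fun a b => ∏ t, f t (a t) (b t)

lemma tens_mul (f g : Fin n → Matrix (Fin D) (Fin D) ℂ) :
    tens f * tens g = tens (fun t => f t * g t) := by
  ext a b
  simp only [tens, Matrix.mul_apply]
  calc ∑ c : Fin n → Fin D, (∏ t, f t (a t) (c t)) * ∏ t, g t (c t) (b t)
      = ∑ c : Fin n → Fin D, ∏ t, (f t (a t) (c t) * g t (c t) (b t)) := by
        simp [Finset.prod_mul_distrib]
    _ = ∏ t, ∑ x, f t (a t) x * g t x (b t) :=
        (Fintype.prod_sum fun t x => f t (a t) x * g t x (b t)).symm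

lemma tens_trace (f : Fin n → Matrix (Fin D) (Fin D) ℂ) :
    (tens f).trace = ∏ t, (f t).trace := by
  simp only [Matrix.trace, Matrix.diag, tens]
  exact (Fintype.prod_sum fun t x => f t x x).symm

lemma tens_conjTranspose (f : Fin n → Matrix (Fin D) (Fin D) ℂ) :
    (tens f)ᴴ = tens (fun t => (f t)ᴴ) := by
  ext a b
  simp [tens, Matrix.conjTranspose_apply, star_prod]

lemma trace_vecMulVec_mul (v : Fin D → ℂ) (A : Matrix (Fin D) (Fin D) ℂ) :
    (vecMulVec v (star v) * A).trace = star v ⬝ᵥ (A *ᵥ v) := by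
  simp only [Matrix.trace, Matrix.diag, Matrix.mul_apply, vecMulVec_apply, dotProduct,
    Matrix.mulVec, Pi.star_apply, Finset.mul_sum]
  rw [Finset.sum_comm]
  exact Finset.sum_congr rfl fun b _ => Finset.sum_congr rfl fun a _ => by ring

lemma herm_vecMul_zero {M : Matrix (Fin D) (Fin D) ℂ} (hM : M.IsHermitian)
    {v : Fin D → ℂ} (hv : M *ᵥ v = 0) : star v ᵥ* M = 0 := by
  have h := congrArg star hv
  rw [star_mulVec, hM.eq] at h
  simpa using h

lemma ker_le_imp_range_le {A B : Matrix (Fin D) (Fin D) ℂ}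
    (hA : A.IsHermitian) (hB : B.IsHermitian)
    (hk : ∀ w : Fin D → ℂ, B *ᵥ w = 0 → A *ᵥ w = 0) :
    LinearMap.range A.mulVecLin ≤ LinearMap.range B.mulVecLin := by
  classical
  have hdisj : Disjoint (LinearMap.range B.mulVecLin) (LinearMap.ker B.mulVecLin) := by
    rw [Submodule.disjoint_def]
    rintro v ⟨w, rfl⟩ hv
    rw [LinearMap.mem_ker, mulVecLin_apply] at hv
    rw [mulVecLin_apply]
    rw [mulVecLin_apply] at hv
    apply dotProduct_star_self_eq_zero.mp
    rw [dotProduct_mulVec, herm_vecMul_zero hB hv, zero_dotProduct]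
  have hsup : LinearMap.range B.mulVecLin ⊔ LinearMap.ker B.mulVecLin = ⊤ := by
    apply Submodule.eq_top_of_finrank_eq
    have h1 := Submodule.finrank_sup_add_finrank_inf_eq
      (LinearMap.range B.mulVecLin) (LinearMap.ker B.mulVecLin)
    have h2 := LinearMap.finrank_range_add_finrank_ker B.mulVecLin
    rw [hdisj.eq_bot] at h1
    simp only [finrank_bot, add_zero] at h1
    rw [h1, h2]
  rintro v ⟨x, rfl⟩
  rw [mulVecLin_apply]
  have hv : A *ᵥ x ∈ LinearMap.range B.mulVecLin ⊔ LinearMap.ker B.mulVecLin := by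
    rw [hsup]; trivial
  obtain ⟨b, hb, k, hkk, hvbk⟩ := Submodule.mem_sup.mp hv
  obtain ⟨w, rfl⟩ := hb
  rw [LinearMap.mem_ker, mulVecLin_apply] at hkk
  rw [mulVecLin_apply] at hvbk
  have hAk : A *ᵥ k = 0 := hk k hkk
  have hk0 : k = 0 := by
    apply dotProduct_star_self_eq_zero.mp
    have h1 : star k ⬝ᵥ (A *ᵥ x) = 0 := by
      rw [dotProduct_mulVec, herm_vecMul_zero hA hAk, zero_dotProduct]
    have h2 : star k ⬝ᵥ (B *ᵥ w) = 0 := by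
      rw [dotProduct_mulVec, herm_vecMul_zero hB hkk, zero_dotProduct]
    have h3 : k = A *ᵥ x - B *ᵥ w := eq_sub_of_add_eq' hvbk
    nth_rewrite 2 [h3]
    rw [dotProduct_sub, h1, h2, sub_zero]
  rw [hk0, add_zero] at hvbk
  exact ⟨w, by rw [mulVecLin_apply, hvbk]⟩

lemma exists_good_vec {A B : Matrix (Fin D) (Fin D) ℂ}
    (hA : A.PosSemidef) (hB : B.PosSemidef)
    (h : ¬ LinearMap.range A.mulVecLin ≤ LinearMap.range B.mulVecLin) :
    ∃ u : Fin D → ℂ, B *ᵥ u = 0 ∧ 0 < star u ⬝ᵥ (A *ᵥ u) ∧ star u ⬝ᵥ u = 1 := by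
  have hw : ∃ w : Fin D → ℂ, B *ᵥ w = 0 ∧ A *ᵥ w ≠ 0 := by
    by_contra hc
    push_neg at hc
    exact h (ker_le_imp_range_le hA.1 hB.1 hc)
  obtain ⟨w, hBw, hAw⟩ := hw
  have hwne : w ≠ 0 := by rintro rfl; simp at hAw
  have hpos : 0 < star w ⬝ᵥ (A *ᵥ w) := by
    refine lt_of_le_of_ne (hA.dotProduct_mulVec_nonneg w) ?_
    intro heq
    exact hAw ((hA.dotProduct_mulVec_zero_iff w).mp heq.symm)
  have hnorm0 : (0:ℂ) ≤ star w ⬝ᵥ w := by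
    simpa using (Matrix.PosSemidef.one (n := Fin D) (R := ℂ)).dotProduct_mulVec_nonneg w
  have hnorm : (0:ℂ) < star w ⬝ᵥ w :=
    lt_of_le_of_ne hnorm0 fun heq =>
      hwne (dotProduct_star_self_eq_zero.mp heq.symm)
  obtain ⟨hre, him⟩ := Complex.lt_def.mp hnorm
  simp only [Complex.zero_re, Complex.zero_im] at hre him
  set s : ℝ := (star w ⬝ᵥ w).re with hs
  have hsval : (star w ⬝ᵥ w) = (s : ℂ) := by
    apply Complex.ext <;> simp [hs, ← him]
  have hspos : 0 < s := hre
  set c : ℂ := Complex.ofReal (Real.sqrt s)⁻¹ with hc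
  have hcstar : star c = c := by rw [hc]; simp
  have hmul : (Real.sqrt s)⁻¹ * (Real.sqrt s)⁻¹ = s⁻¹ := by
    rw [← Real.sqrt_inv, Real.mul_self_sqrt (by positivity)]
  have hcc : c * c = ((s⁻¹ : ℝ) : ℂ) := by
    rw [hc, ← Complex.ofReal_mul, hmul]
  refine ⟨c • w, ?_, ?_, ?_⟩
  · rw [Matrix.mulVec_smul, hBw, smul_zero]
  · have hexp : star (c • w) ⬝ᵥ (A *ᵥ (c • w)) = (c * c) * (star w ⬝ᵥ (A *ᵥ w)) := by
      rw [Matrix.mulVec_smul, star_smul, smul_dotProduct, dotProduct_smul, hcstar,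
        smul_eq_mul, smul_eq_mul, ← mul_assoc]
    rw [hexp, hcc]
    have h1 : (0:ℂ) < ((s⁻¹ : ℝ) : ℂ) := Complex.zero_lt_real.mpr (inv_pos.mpr hspos)
    exact mul_pos h1 hpos
  · rw [star_smul, smul_dotProduct, dotProduct_smul, hcstar, smul_eq_mul, smul_eq_mul,
      ← mul_assoc, hcc, hsval, ← Complex.ofReal_mul, inv_mul_cancel₀ (ne_of_gt hspos)]
    simp

lemma smul_psd {μ : Type*} [Fintype μ] {r : ℝ} (hr : 0 ≤ r) {Q : Matrix μ μ ℂ}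
    (hQ : Q.PosSemidef) : (((r : ℂ)) • Q).PosSemidef := by
  apply Matrix.PosSemidef.of_dotProduct_mulVec_nonneg
  · show (((r:ℂ)) • Q)ᴴ = _
    rw [Matrix.conjTranspose_smul, hQ.1.eq]
    congr 1
    simp [Complex.star_def, Complex.conj_ofReal]
  · intro x
    rw [Matrix.smul_mulVec, dotProduct_smul, smul_eq_mul]
    exact mul_nonneg (Complex.zero_le_real.mpr hr) (hQ.dotProduct_mulVec_nonneg x)

lemma sum_psd {μ ι : Type*} [Fintype μ] (s : Finset ι) (f : ι → Matrix μ μ ℂ)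
    (h : ∀ i ∈ s, (f i).PosSemidef) : (∑ i ∈ s, f i).PosSemidef :=
  Finset.sum_induction f _ (fun _ _ ha hb => ha.add hb) Matrix.PosSemidef.zero h

end UnambigAux


open UnambigAux in
/-- if for all i ≠ j the column space of ρ_i is not contained in that of
ρ_j, then the n-fold tensor powers ρ_1^{⊗n}, …, ρ_n^{⊗n} are unambiguously
distinguishable. -/
theorem tensorPow_unambig_of_ranges_not_le {D n : ℕ}
    (ρ : Fin n → Matrix (Fin D) (Fin D) ℂ)
    (hpsd : ∀ i, (ρ i).PosSemidef) (htr : ∀ i, (ρ i).trace = 1)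
    (h : ∀ i j, i ≠ j →
      ¬ LinearMap.range (ρ i).mulVecLin ≤ LinearMap.range (ρ j).mulVecLin) :
    UnambiguouslyDistinguishable (fun i => tensorPow (ρ i) n) := by
  classical
  rcases Nat.eq_zero_or_pos n with hn | hn
  · subst hn
    exact ⟨1, fun i => i.elim0, Matrix.PosSemidef.one, fun i => i.elim0, by simp,
      fun i => i.elim0, fun i => i.elim0⟩
  -- choose annihilating vectors
  have hu : ∀ i j : Fin n, i ≠ j → ∃ u : Fin D → ℂ,
      (ρ j) *ᵥ u = 0 ∧ 0 < star u ⬝ᵥ ((ρ i) *ᵥ u) ∧ star u ⬝ᵥ u = 1 :=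
    fun i j hij => exists_good_vec (hpsd i) (hpsd j) (h i j hij)
  choose u hu1 hu2 hu3 using hu
  -- the factor matrices
  set M : Fin n → Fin n → Matrix (Fin D) (Fin D) ℂ := fun i t =>
    if ht : t = i then 1 else vecMulVec (u i t (Ne.symm ht)) (star (u i t (Ne.symm ht)))
    with hMdef
  have hM_herm : ∀ i t, (M i t)ᴴ = M i t := by
    intro i t
    by_cases ht : t = i
    · simp [hMdef, ht]
    · simp only [hMdef, dif_neg ht]
      ext a b
      simp [Matrix.conjTranspose_apply, vecMulVec_apply, mul_comm]
  have hMM : ∀ i t, M i t * M i t = M i t := by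
    intro i t
    by_cases ht : t = i
    · simp [hMdef, ht]
    · simp only [hMdef, dif_neg ht]
      set v := u i t (Ne.symm ht) with hv
      have hv3 : ∑ c, star (v c) * v c = 1 := by
        have := hu3 i t (Ne.symm ht)
        simpa [dotProduct] using this
      ext a b
      rw [Matrix.mul_apply]
      simp only [vecMulVec_apply, Pi.star_apply]
      calc ∑ c, (v a * star (v c)) * (v c * star (v b))
          = (∑ c, star (v c) * v c) * (v a * star (v b)) := by
            rw [Finset.sum_mul]
            exact Finset.sum_congr rfl fun c _ => by ring
        _ = v a * star (v b) := by rw [hv3, one_mul]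
  -- the projectors
  set Q : Fin n → Matrix (Fin n → Fin D) (Fin n → Fin D) ℂ := fun i => tens (M i) with hQdef
  have hQ_herm : ∀ i, (Q i)ᴴ = Q i := by
    intro i
    rw [hQdef, tens_conjTranspose]
    have he : (fun t => (M i t)ᴴ) = M i := funext (hM_herm i)
    rw [he]
  have hQQ : ∀ i, Q i * Q i = Q i := by
    intro i
    rw [hQdef, tens_mul]
    have he : (fun t => M i t * M i t) = M i := funext (hMM i)
    rw [he]
  have hQ_psd : ∀ i, (Q i).PosSemidef := by
    intro i
    have h1 := Matrix.posSemidef_self_mul_conjTranspose (Q i)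
    rwa [hQ_herm, hQQ] at h1
  have hQ1_psd : ∀ i, ((1 : Matrix (Fin n → Fin D) (Fin n → Fin D) ℂ) - Q i).PosSemidef := by
    intro i
    have hherm : ((1 : Matrix (Fin n → Fin D) (Fin n → Fin D) ℂ) - Q i)ᴴ = 1 - Q i := by
      rw [Matrix.conjTranspose_sub, Matrix.conjTranspose_one, hQ_herm]
    have hsq : ((1 : Matrix (Fin n → Fin D) (Fin n → Fin D) ℂ) - Q i) * (1 - Q i)
        = 1 - Q i := by
      rw [mul_sub, mul_one, sub_mul, one_mul, hQQ]
      abel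
    have h1 := Matrix.posSemidef_self_mul_conjTranspose (1 - Q i)
    rwa [hherm, hsq] at h1
  -- the POVM
  have hn' : (0:ℝ) < (n:ℝ) := by exact_mod_cast hn
  set c : ℂ := Complex.ofReal (n : ℝ)⁻¹ with hcdef
  have hc_pos : (0:ℂ) < c := Complex.zero_lt_real.mpr (inv_pos.mpr hn')
  have hc_n : c * (n : ℂ) = 1 := by
    rw [hcdef]
    have : ((n:ℝ) : ℂ) = (n : ℂ) := by push_cast; ring
    rw [← this, ← Complex.ofReal_mul, inv_mul_cancel₀ (ne_of_gt hn')]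
    simp
  set P : Fin n → Matrix (Fin n → Fin D) (Fin n → Fin D) ℂ := fun i => c • Q i with hPdef
  set P0 : Matrix (Fin n → Fin D) (Fin n → Fin D) ℂ := 1 - ∑ i, P i with hP0def
  have hP0_eq : P0 = c • ∑ i, (1 - Q i) := by
    rw [hP0def, Finset.sum_sub_distrib, smul_sub, Finset.sum_const, Finset.card_univ,
      Fintype.card_fin, ← Nat.cast_smul_eq_nsmul ℂ n (1 : Matrix (Fin n → Fin D) (Fin n → Fin D) ℂ),
      smul_smul, hc_n, one_smul, Finset.smul_sum]
  -- trace computations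
  have htrace : ∀ i j, (P i * tensorPow (ρ j) n).trace = c * ∏ t, (M i t * ρ j).trace := by
    intro i j
    have h1 : tensorPow (ρ j) n = tens (fun _ => ρ j) := rfl
    rw [hPdef, smul_mul_assoc, Matrix.trace_smul, smul_eq_mul, h1, hQdef, tens_mul, tens_trace]
  refine ⟨P0, P, ?_, ?_, ?_, ?_, ?_⟩
  · rw [hP0_eq, hcdef]
    exact smul_psd (le_of_lt (inv_pos.mpr hn'))
      (sum_psd _ _ fun i _ => hQ1_psd i)
  · intro i
    rw [hPdef, hcdef]
    exact smul_psd (le_of_lt (inv_pos.mpr hn')) (hQ_psd i)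
  · rw [hP0def]; abel
  · intro i j hij
    rw [htrace]
    have hzero : (M i j * ρ j).trace = 0 := by
      have hji : ¬ (j = i) := fun e => hij e.symm
      rw [hMdef]
      simp only [dif_neg hji]
      rw [trace_vecMulVec_mul, hu1 i j (Ne.symm hji), dotProduct_zero]
    rw [Finset.prod_eq_zero (Finset.mem_univ j) hzero, mul_zero]
  · intro i
    rw [htrace]
    apply mul_pos hc_pos
    apply Finset.prod_pos
    intro t _
    by_cases ht : t = i
    · subst ht
      have hMi : M t t = 1 := by rw [hMdef]; simp
      rw [hMi, one_mul, htr]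
      exact zero_lt_one
    · rw [hMdef]
      simp only [dif_neg ht]
      rw [trace_vecMulVec_mul]
      exact hu2 i t (Ne.symm ht)
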